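/- arXiv:2007.10154 — 7 statements merged into one kernel-verified Lean document; each statement's English description precedes it below -/
import Mathlib

section
/- Let E be a finite-dimensional real vector space with a nondegenerate alternating bilinear form ω, let λ : E → ℝ be linear, let S ⊆ E be a subspace, and set τ = S^⊥ = {u ∈ E : ω(u,s) = 0 for all s ∈ S}. Define on E × ℝ the alternating bilinear form ω̃((u,a),(u',a')) = ω(u,u') and the linear functional α(u,a) = a − λ(u); define on E × ℝ × ℝ the alternating bilinear form Ω((u,a,b),(u',a',b')) = b·a' − b'·a − b·λ(u') + b'·λ(u) − ω(u,u'). Then the following three conditions are equivalent: (1) τ ⊆ S and λ vanishes on τ; (2) {w ∈ E × ℝ : ω̃(w,(s,0)) = 0 for all s ∈ S} ∩ ker α ⊆ S × {0}; (3) {w ∈ E × ℝ × ℝ : Ω(w,(s,0,c)) = 0 for all s ∈ S and all c ∈ ℝ} ⊆ S × {0} × ℝ. -/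
/-- Pointwise linear-algebra form of the paper's lemma on conicity
(Section "Conicity on symplectic hypersurfaces"): equivalence of
(1) conic coisotropic, (2) contact coisotropic in the contactization, and
(3) coisotropic in the symplectization. -/
theorem conic_coisotropic_tfae
    (E : Type*) [AddCommGroup E] [Module ℝ E] [FiniteDimensional ℝ E]
    (ω : E →ₗ[ℝ] E →ₗ[ℝ] ℝ)
    (halt : ∀ u : E, ω u u = 0)
    (hnd : ∀ u : E, (∀ w : E, ω u w = 0) → u = 0)
    (lam : E →ₗ[ℝ] ℝ)
    (S : Submodule ℝ E) :
    List.TFAE [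
      -- (1) τ = Sᗮ ⊆ S and lam vanishes on τ
      (∀ u : E, (∀ s ∈ S, ω u s = 0) → u ∈ S ∧ lam u = 0),
      -- (2) contact coisotropy in E × ℝ with form ω̃ and functional α(u,a) = a - lam u
      (∀ w : E × ℝ, (∀ s ∈ S, ω w.1 s = 0) → w.2 - lam w.1 = 0 →
        w.1 ∈ S ∧ w.2 = 0),
      -- (3) coisotropy in E × ℝ × ℝ for Ω((u,a,b),(u',a',b')) =
      --     b a' - b' a - b lam u' + b' lam u - ω u u'
      (∀ w : E × ℝ × ℝ,
        (∀ s ∈ S, ∀ c : ℝ,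
          w.2.2 * 0 - c * w.2.1 - w.2.2 * lam s + c * lam w.1 - ω w.1 s = 0) →
        w.1 ∈ S ∧ w.2.1 = 0) ] := by
  have hAlt : ω.IsAlt := halt
  have hRefl : ω.IsRefl := hAlt.isRefl
  have hNondeg : LinearMap.BilinForm.Nondegenerate ω := hRefl.nondegenerate_iff_separatingLeft.mpr hnd
  tfae_have 1 → 2 := by
    intro h1 w hw ha
    obtain ⟨hS, hl⟩ := h1 w.1 hw
    refine ⟨hS, ?_⟩
    have := ha
    linarith [ha]
  tfae_have 2 → 1 := by
    intro h2 u hu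
    have := h2 (u, lam u) hu (by simp)
    exact ⟨this.1, by simpa using this.2⟩
  tfae_have 1 → 3 := by
    intro h1 w hw
    set u := w.1 with hu
    set a := w.2.1 with ha
    set b := w.2.2 with hb
    -- from c = 0 and c = 1 at each s ∈ S extract: ω u s = -b * lam s, and a = lam u
    have key : ∀ s ∈ S, ω u s = -(b * lam s) := by
      intro s hs
      have := hw s hs 0
      simp at this
      linarith
    have haa : a = lam u := by
      have h0 := hw 0 S.zero_mem 0
      have h1' := hw 0 S.zero_mem 1
      simp at h0 h1'
      linarith
    -- u is orthogonal to τ := orthogonal of S, hence u ∈ S by double orthogonal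
    have hτ : ∀ t, (∀ s ∈ S, ω t s = 0) → ω u t = 0 := by
      intro t ht
      obtain ⟨htS, htl⟩ := h1 t ht
      have := key t htS
      rw [this, htl]; ring
    have huS : u ∈ S := by
      rw [← LinearMap.BilinForm.orthogonal_orthogonal hNondeg hRefl S]
      intro t ht
      have ht' : ∀ s ∈ S, ω t s = 0 := fun s hs => hRefl _ _ (ht s hs)
      exact hRefl _ _ (hτ t ht')
    refine ⟨huS, ?_⟩
    -- show a = 0, i.e. lam u = 0
    by_cases hb0 : b = 0
    · -- then ω u s = 0 for all s ∈ S, so u ∈ τ and lam u = 0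
      have : ∀ s ∈ S, ω u s = 0 := by
        intro s hs; rw [key s hs, hb0]; ring
      rw [haa, (h1 u this).2]
    · have := key u huS
      rw [halt u] at this
      have hlu : lam u = 0 := by
        rcases mul_eq_zero.mp (by linarith : b * lam u = 0) with h | h
        · exact absurd h hb0
        · exact h
      rw [haa, hlu]
  tfae_have 3 → 1 := by
    intro h3 u hu
    have := h3 (u, lam u, 0) (by
      intro s hs c
      rw [hu s hs]
      ring)
    exact ⟨this.1, by simpa using this.2⟩
  tfae_finish
end

section
/- Let m, k ≥ 0 and identify the cotangent bundle of ℝ^m × ℝ^k with (ℝ^m × ℝ^k) × (ℝ^m × ℝ^k), writing points as (x, e, ξ, η) with (x,e) the base point and (ξ,η) the covector. Let Λ ⊆ (ℝ^m × ℝ^k) × (ℝ^m × ℝ^k) be conical, i.e. if (x,e,ξ,η) ∈ Λ and c > 0 then (x,e,cξ,cη) ∈ Λ. Let N = {(x,e,ξ,0) : x ∈ ℝ^m, e ∈ ℝ^k, ξ ∈ ℝ^m} (the covectors pulled back from the base ℝ^m), and let Π(x,e,ξ,η) = (x,e,η) be the projection to (ℝ^m × ℝ^k) × ℝ^k (the relative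 cotangent bundle). Then Λ +̂ N = Π^{-1}( closure( Π(Λ) ) ). -/
open Filter Topology

/-- The Kashiwara–Schapira `+̂` operation on subsets of a cotangent bundle
(in local coordinates): `(p, ζ) ∈ A +̂ B` iff there are sequences
`(aₙ, ζₙ) ∈ A`, `(bₙ, ηₙ) ∈ B` with `aₙ → p`, `bₙ → p`, `ζₙ + ηₙ → ζ` and
`‖aₙ - bₙ‖ ‖ζₙ‖ → 0`. -/
def hatPlus {V W : Type*} [NormedAddCommGroup V] [NormedAddCommGroup W]
    (A B : Set (V × W)) : Set (V × W) :=
  {q | ∃ (a b : ℕ → V) (ζ η : ℕ → W),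
    (∀ n, (a n, ζ n) ∈ A) ∧ (∀ n, (b n, η n) ∈ B) ∧
    Tendsto a atTop (𝓝 q.1) ∧ Tendsto b atTop (𝓝 q.1) ∧
    Tendsto (fun n => ζ n + η n) atTop (𝓝 q.2) ∧
    Tendsto (fun n => ‖a n - b n‖ * ‖ζ n‖) atTop (𝓝 (0 : ℝ))}

/-- Coordinate form of the paper's Lemma `lem:addrelcotpushpull`: for a trivial
fiber bundle `ℝᵐ × ℝᵏ → ℝᵐ` and a conical subset `Λ` of the cotangent bundle,
`Λ +̂ π*T*B = Π⁻¹(closure(Π(Λ)))`, where `N = π*T*B` is the set of covectors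
pulled back from the base and `Π` is the projection to the relative cotangent
bundle. -/
theorem hatPlus_base_conormal_eq_preimage_closure (m k : ℕ)
    (Λ : Set ((EuclideanSpace ℝ (Fin m) × EuclideanSpace ℝ (Fin k)) ×
      (EuclideanSpace ℝ (Fin m) × EuclideanSpace ℝ (Fin k))))
    (hconic : ∀ q ∈ Λ, ∀ c : ℝ, 0 < c → (q.1, c • q.2) ∈ Λ) :
    hatPlus Λ {q : (EuclideanSpace ℝ (Fin m) × EuclideanSpace ℝ (Fin k)) ×
        (EuclideanSpace ℝ (Fin m) × EuclideanSpace ℝ (Fin k)) | q.2.2 = 0} =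
      (fun q : (EuclideanSpace ℝ (Fin m) × EuclideanSpace ℝ (Fin k)) ×
          (EuclideanSpace ℝ (Fin m) × EuclideanSpace ℝ (Fin k)) => (q.1, q.2.2)) ⁻¹'
        closure ((fun q : (EuclideanSpace ℝ (Fin m) × EuclideanSpace ℝ (Fin k)) ×
          (EuclideanSpace ℝ (Fin m) × EuclideanSpace ℝ (Fin k)) => (q.1, q.2.2)) '' Λ) := by
  ext q
  obtain ⟨⟨x, e⟩, ξ, η⟩ := q
  constructor
  · rintro ⟨a, b, ζ, ηs, hA, hB, ha, hb, hsum, -⟩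
    simp only [Set.mem_setOf_eq] at hB
    have h2 : Tendsto (fun n => (ζ n).2) atTop (𝓝 η) := by
      have h := (continuous_snd.tendsto _).comp hsum
      have he : (Prod.snd ∘ fun n => ζ n + ηs n) = fun n => (ζ n).2 := by
        funext n; simp [Prod.snd_add, hB n]
      rwa [he] at h
    exact mem_closure_of_tendsto (ha.prodMk_nhds h2)
      (Eventually.of_forall fun n => ⟨(a n, ζ n), hA n, rfl⟩)
  · intro hq
    simp only [Set.mem_preimage] at hq
    obtain ⟨u, hu, hlim⟩ := mem_closure_iff_seq_limit.1 hq
    choose p hp hfp using hu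
    refine ⟨fun n => (p n).1, fun n => (p n).1, fun n => (p n).2,
      fun n => (ξ - (p n).2.1, 0), fun n => hp n, fun n => rfl, ?_, ?_, ?_, ?_⟩
    · have : (fun n => (p n).1) = fun n => (u n).1 := by
        funext n; rw [← hfp n]
      rw [this]; exact (continuous_fst.tendsto _).comp hlim
    · have : (fun n => (p n).1) = fun n => (u n).1 := by
        funext n; rw [← hfp n]
      rw [this]; exact (continuous_fst.tendsto _).comp hlim
    · have he : (fun n => (p n).2 + (ξ - (p n).2.1, 0)) =
          fun n => ((ξ : EuclideanSpace ℝ (Fin m)), (u n).2) := by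
        funext n
        rw [← hfp n]
        ext1
        · simp [Prod.fst_add]
        · simp [Prod.snd_add]
      rw [he]
      exact tendsto_const_nhds.prodMk_nhds ((continuous_snd.tendsto _).comp hlim)
    · simp only [sub_self, norm_zero, zero_mul]
      exact tendsto_const_nhds
end

section
/- Let V be a topological space and η : ℝ × V → V a continuous map with η(0, v) = v for all v ∈ V. For Z ⊆ V and ε > 0, say Z is ε-chordless if there is no s ∈ (0, ε] and z ∈ Z with η(s, z) ∈ Z. Let Y ⊆ V be compact and locally chordless, meaning: for every y ∈ Y there exist an open neighborhood U of y and ε > 0 such that Y ∩ U is ε-chordless. Then there exists ε > 0 such that Y is ε-chordless. -/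
/-- A compact, locally chordless subset is `ε`-chordless for some `ε > 0`
(Section "Propagation and displacement" of the paper), stated for an arbitrary
continuous flow-like map `η : ℝ × V → V` with `η(0, ·) = id` on a topological
space.  Here `Z` is `ε`-chordless if there is no `s ∈ (0, ε]` and `z ∈ Z` with
`η (s, z) ∈ Z`. -/
theorem compact_locallyChordless_isChordless
    (V : Type*) [TopologicalSpace V]
    (η : ℝ × V → V) (hcont : Continuous η) (hid : ∀ v : V, η (0, v) = v)
    (Y : Set V) (hY : IsCompact Y)
    (hloc : ∀ y ∈ Y, ∃ U : Set V, IsOpen U ∧ y ∈ U ∧ ∃ ε > (0 : ℝ),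
      ∀ s ∈ Set.Ioc (0 : ℝ) ε, ∀ z ∈ Y ∩ U, η (s, z) ∉ Y ∩ U) :
    ∃ ε > (0 : ℝ), ∀ s ∈ Set.Ioc (0 : ℝ) ε, ∀ z ∈ Y, η (s, z) ∉ Y := by
  classical
  choose U hUopen hymem ε hεpos hchord using hloc
  have key : ∀ y (hy : y ∈ Y), ∃ (W : Set V) (δ : ℝ), IsOpen W ∧ y ∈ W ∧ W ⊆ U y hy ∧
      0 < δ ∧ ∀ s ∈ Set.Ioc (0:ℝ) δ, ∀ z ∈ W, η (s, z) ∈ U y hy := by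
    intro y hy
    have hpre : IsOpen (η ⁻¹' U y hy) := (hUopen y hy).preimage hcont
    have hmem : ((0:ℝ), y) ∈ η ⁻¹' U y hy := by
      simp only [Set.mem_preimage, hid y]; exact hymem y hy
    rcases isOpen_prod_iff.mp hpre 0 y hmem with ⟨A, B, hA, hB, h0A, hyB, hAB⟩
    rcases Metric.isOpen_iff.mp hA 0 h0A with ⟨δ, hδ, hball⟩
    refine ⟨B ∩ U y hy, δ/2, hB.inter (hUopen y hy), ⟨hyB, hymem y hy⟩,
      Set.inter_subset_right, by linarith, ?_⟩
    intro s hs z hz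
    have hsA : s ∈ A := by
      apply hball
      simp only [Metric.mem_ball, Real.dist_eq, sub_zero, abs_of_pos hs.1]
      linarith [hs.2]
    exact hAB (Set.mk_mem_prod hsA hz.1)
  choose W δ hWopen hyW hWU hδpos hη using key
  obtain ⟨t, ht⟩ := hY.elim_nhds_subcover' (fun y hy => W y hy)
    (fun y hy => (hWopen y hy).mem_nhds (hyW y hy))
  rcases t.eq_empty_or_nonempty with rfl | hte
  · refine ⟨1, one_pos, fun s hs z hz _ => ?_⟩
    have := ht hz
    simp at this
  · set f : Y → ℝ := fun p => min (δ p.1 p.2) (ε p.1 p.2) with hf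
    refine ⟨t.inf' hte f, ?_, ?_⟩
    · exact (Finset.lt_inf'_iff hte).mpr fun p _ => lt_min (hδpos p.1 p.2) (hεpos p.1 p.2)
    · intro s hs z hz hcon
      have hzU := ht hz
      simp only [Set.mem_iUnion] at hzU
      obtain ⟨p, hpt, hzW⟩ := hzU
      have hle : t.inf' hte f ≤ f p := Finset.inf'_le f hpt
      have hsδ : s ≤ δ p.1 p.2 := le_trans hs.2 (le_trans hle (min_le_left _ _))
      have hsε : s ≤ ε p.1 p.2 := le_trans hs.2 (le_trans hle (min_le_right _ _))
      exact hchord p.1 p.2 s ⟨hs.1, hsε⟩ z ⟨hz, hWU p.1 p.2 hzW⟩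
        ⟨hcon, hη p.1 p.2 s ⟨hs.1, hsδ⟩ z hzW⟩
end

section
/- Let E be a finite-dimensional real normed vector space with a nondegenerate alternating bilinear form ω, and let f : E → ℝ be differentiable with f(x) > 0 for all x. Define h : E × E → ℝ by h(z₁, z₂) = √(f(z₁)² + f(z₂)²), and let v_h be the Hamiltonian vector field of h with respect to the product form (ω ⊕ ω)((u₁,u₂),(w₁,w₂)) = ω(u₁,w₁) + ω(u₂,w₂). If γ₁, γ₂ : ℝ → E are integral curves of the Hamiltonian vector field v_f of f with f(γ₁(0)) = f(γ₂(0)) = 1, then δ(t) := (γ₁(t/√2), γ₂(t/√2)) is an integral curve of v_h. -/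
/-- Computational core of the paper's Lemma "three ways of looking at a Reeb
chord": if `γ₁, γ₂` are integral curves of the Hamiltonian vector field of `f`
with `f(γᵢ(0)) = 1`, then `t ↦ (γ₁(t/√2), γ₂(t/√2))` is an integral curve of
the Hamiltonian vector field of `h(z₁,z₂) = √(f(z₁)² + f(z₂)²)` with respect to
the product form. -/
theorem diagonal_flow_of_hash_hamiltonian
    (E : Type*) [NormedAddCommGroup E] [NormedSpace ℝ E] [FiniteDimensional ℝ E]
    (ω : E →ₗ[ℝ] E →ₗ[ℝ] ℝ)
    (halt : ∀ u : E, ω u u = 0)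
    (hnd : ∀ u : E, (∀ w : E, ω u w = 0) → u = 0)
    (f : E → ℝ) (hf : Differentiable ℝ f) (hfpos : ∀ x : E, 0 < f x)
    (vf : E → E)
    (hvf : ∀ x u : E, ω (vf x) u = fderiv ℝ f x u)
    (vh : E × E → E × E)
    (hvh : ∀ z u : E × E, ω (vh z).1 u.1 + ω (vh z).2 u.2 =
      fderiv ℝ (fun w : E × E => Real.sqrt (f w.1 ^ 2 + f w.2 ^ 2)) z u)
    (γ₁ γ₂ : ℝ → E)
    (hγ₁ : ∀ t : ℝ, HasDerivAt γ₁ (vf (γ₁ t)) t)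
    (hγ₂ : ∀ t : ℝ, HasDerivAt γ₂ (vf (γ₂ t)) t)
    (h1 : f (γ₁ 0) = 1) (h2 : f (γ₂ 0) = 1) :
    ∀ t : ℝ, HasDerivAt (fun t => (γ₁ (t / Real.sqrt 2), γ₂ (t / Real.sqrt 2)))
      (vh (γ₁ (t / Real.sqrt 2), γ₂ (t / Real.sqrt 2))) t := by
  have hs2 : (0:ℝ) < Real.sqrt 2 := Real.sqrt_pos.mpr (by norm_num)
  -- f is constant along integral curves
  have hconst : ∀ (γ : ℝ → E), (∀ t, HasDerivAt γ (vf (γ t)) t) →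
      ∀ s t : ℝ, f (γ s) = f (γ t) := by
    intro γ hγ s t
    have hd : ∀ u : ℝ, HasDerivAt (fun u => f (γ u)) 0 u := by
      intro u
      have := (hf (γ u)).hasFDerivAt.comp_hasDerivAt u (hγ u)
      have h0 : fderiv ℝ f (γ u) (vf (γ u)) = 0 := by
        rw [← hvf]; exact halt _
      rwa [h0] at this
    exact is_const_of_deriv_eq_zero (f := fun u => f (γ u))
      (fun u => (hd u).differentiableAt) (fun u => (hd u).deriv) s t
  have hc1 : ∀ t : ℝ, f (γ₁ t) = 1 := fun t => (hconst γ₁ hγ₁ t 0).trans h1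
  have hc2 : ∀ t : ℝ, f (γ₂ t) = 1 := fun t => (hconst γ₂ hγ₂ t 0).trans h2
  -- compute vh at a point where both f-values are 1
  have key : ∀ z : E × E, f z.1 = 1 → f z.2 = 1 →
      vh z = ((Real.sqrt 2)⁻¹ • vf z.1, (Real.sqrt 2)⁻¹ • vf z.2) := by
    intro z hz1 hz2
    set L : E × E →L[ℝ] ℝ :=
      ((2 * f z.1) • ((fderiv ℝ f z.1).comp (ContinuousLinearMap.fst ℝ E E)))
      + ((2 * f z.2) • ((fderiv ℝ f z.2).comp (ContinuousLinearMap.snd ℝ E E))) with hL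
    have hq : HasFDerivAt (fun w : E × E => f w.1 ^ 2 + f w.2 ^ 2) L z := by
      have h1' : HasFDerivAt (fun w : E × E => f w.1 ^ 2)
          ((2 * f z.1) • ((fderiv ℝ f z.1).comp (ContinuousLinearMap.fst ℝ E E))) z := by
        have := (hasDerivAt_pow 2 (f z.1)).comp_hasFDerivAt z
          ((hf z.1).hasFDerivAt.comp z (hasFDerivAt_fst (𝕜 := ℝ) (p := z)))
        simpa [pow_one, Function.comp_def] using this
      have h2' : HasFDerivAt (fun w : E × E => f w.2 ^ 2)
          ((2 * f z.2) • ((fderiv ℝ f z.2).comp (ContinuousLinearMap.snd ℝ E E))) z := by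
        have := (hasDerivAt_pow 2 (f z.2)).comp_hasFDerivAt z
          ((hf z.2).hasFDerivAt.comp z (hasFDerivAt_snd (𝕜 := ℝ) (p := z)))
        simpa [pow_one, Function.comp_def] using this
      exact h1'.add h2'
    have hq2 : f z.1 ^ 2 + f z.2 ^ 2 = 2 := by rw [hz1, hz2]; norm_num
    have hsq : HasDerivAt Real.sqrt (1 / (2 * Real.sqrt (f z.1 ^ 2 + f z.2 ^ 2)))
        (f z.1 ^ 2 + f z.2 ^ 2) := Real.hasDerivAt_sqrt (by rw [hq2]; norm_num)
    have hh : HasFDerivAt (fun w : E × E => Real.sqrt (f w.1 ^ 2 + f w.2 ^ 2))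
        ((1 / (2 * Real.sqrt (f z.1 ^ 2 + f z.2 ^ 2))) • L) z :=
      hsq.comp_hasFDerivAt z hq
    have hder : ∀ u : E × E,
        fderiv ℝ (fun w : E × E => Real.sqrt (f w.1 ^ 2 + f w.2 ^ 2)) z u =
        (Real.sqrt 2)⁻¹ * (fderiv ℝ f z.1 u.1 + fderiv ℝ f z.2 u.2) := by
      intro u
      rw [hh.fderiv]
      simp only [ContinuousLinearMap.smul_apply, hL, ContinuousLinearMap.add_apply,
        ContinuousLinearMap.coe_comp', Function.comp_apply,
        ContinuousLinearMap.coe_fst', ContinuousLinearMap.coe_snd',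
        ContinuousLinearMap.coe_smul', Pi.smul_apply, smul_eq_mul, hq2, hz1, hz2]
      ring
    have key1 : ∀ w : E, ω ((vh z).1) w = ω ((Real.sqrt 2)⁻¹ • vf z.1) w := by
      intro w
      have hw := hvh z (w, 0)
      rw [hder (w, 0)] at hw
      simp only [map_zero, add_zero] at hw
      rw [map_smul]
      simp only [LinearMap.smul_apply, smul_eq_mul, hvf]
      rw [hw]
    have key2 : ∀ w : E, ω ((vh z).2) w = ω ((Real.sqrt 2)⁻¹ • vf z.2) w := by
      intro w
      have hw := hvh z (0, w)
      rw [hder (0, w)] at hw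
      simp only [map_zero, zero_add] at hw
      rw [map_smul]
      simp only [LinearMap.smul_apply, smul_eq_mul, hvf]
      rw [hw]
    have e1 : (vh z).1 = (Real.sqrt 2)⁻¹ • vf z.1 :=
      sub_eq_zero.mp (hnd _ (fun w => by simp [map_sub, key1 w]))
    have e2 : (vh z).2 = (Real.sqrt 2)⁻¹ • vf z.2 :=
      sub_eq_zero.mp (hnd _ (fun w => by simp [map_sub, key2 w]))
    exact Prod.ext e1 e2
  -- now the derivative computation
  intro t
  have hσ : HasDerivAt (fun t : ℝ => t / Real.sqrt 2) (Real.sqrt 2)⁻¹ t := by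
    simpa [div_eq_mul_inv] using (hasDerivAt_id t).div_const (Real.sqrt 2)
  have hd1 : HasDerivAt (fun t => γ₁ (t / Real.sqrt 2))
      ((Real.sqrt 2)⁻¹ • vf (γ₁ (t / Real.sqrt 2))) t :=
    (hγ₁ (t / Real.sqrt 2)).scomp t hσ
  have hd2 : HasDerivAt (fun t => γ₂ (t / Real.sqrt 2))
      ((Real.sqrt 2)⁻¹ • vf (γ₂ (t / Real.sqrt 2))) t :=
    (hγ₂ (t / Real.sqrt 2)).scomp t hσ
  have := hd1.prodMk hd2
  rwa [key (γ₁ (t / Real.sqrt 2), γ₂ (t / Real.sqrt 2)) (hc1 _) (hc2 _)]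
end

section
/- Let n ≥ 1 and equip ℝ^n × ℝ^n with the standard symplectic form ω₀((x,ξ),(x',ξ')) = ⟨ξ, x'⟩ − ⟨ξ', x⟩, and equip (ℝ^n × ℝ^n) × (ℝ^n × ℝ^n) with the product form ω₀ ⊕ ω₀. Let σ(x,ξ) = (x,−ξ). Let f : ℝ^n × ℝ^n → ℝ be differentiable with f > 0 everywhere and f ∘ σ = f, let v_f be its Hamiltonian vector field with respect to ω₀, and let γ : ℝ → ℝ^n × ℝ^n be an integral curve of v_f with f(γ(0)) = 1. Fix ℓ > 0 and write γ(0) = (x₁,ξ₁), γ(ℓ) = (x₂,ξ₂), and (x',ξ') = γ(ℓ/2). Define h(z₁,z₂) = √(f(z₁)² + f(z₂)²) with Hamiltonian vector field v_h with respect to ω₀ ⊕ ω₀. Then the curve δ(t) := ( σ(γ(ℓ/2 − t/√2)), γ(ℓ/2 + t/√2) ) is an integral curve of v_h satisfying δ(0) = (x', −ξ', x', ξ'), which lies in the conormal of the diagonal {(x, −ξ, x, ξ) : x, ξ ∈ ℝ^n}, and δ(ℓ/√2) = (x₁, −ξ₁, x₂, ξ₂). -/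
open scoped RealInnerProductSpace

noncomputable def omega0 {n : ℕ}
    (z u : EuclideanSpace ℝ (Fin n) × EuclideanSpace ℝ (Fin n)) : ℝ :=
  ⟪z.2, u.1⟫ - ⟪u.2, z.1⟫

lemma omega0_self {n : ℕ} (z : EuclideanSpace ℝ (Fin n) × EuclideanSpace ℝ (Fin n)) :
    omega0 z z = 0 := by
  simp only [omega0, real_inner_comm, sub_self]

lemma omega0_zero_right {n : ℕ} (z : EuclideanSpace ℝ (Fin n) × EuclideanSpace ℝ (Fin n)) :
    omega0 z 0 = 0 := by
  simp only [omega0, Prod.fst_zero, Prod.snd_zero, inner_zero_left, inner_zero_right, sub_zero]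

lemma omega0_nondeg {n : ℕ} (a b : EuclideanSpace ℝ (Fin n) × EuclideanSpace ℝ (Fin n))
    (h : ∀ u, omega0 a u = omega0 b u) : a = b := by
  have h2 : a.2 = b.2 := by
    have h1 := h (a.2 - b.2, 0)
    simp only [omega0, inner_zero_left, sub_zero] at h1
    have : ⟪a.2 - b.2, a.2 - b.2⟫ = 0 := by
      rw [inner_sub_left, h1, sub_self]
    exact sub_eq_zero.mp (inner_self_eq_zero.mp this)
  have h1 : a.1 = b.1 := by
    have h1 := h (0, b.1 - a.1)
    simp only [omega0, inner_zero_right, zero_sub, neg_inj] at h1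
    have : ⟪b.1 - a.1, b.1 - a.1⟫ = 0 := by
      rw [inner_sub_right, h1, sub_self]
    exact (sub_eq_zero.mp (inner_self_eq_zero.mp this)).symm
  exact Prod.ext h1 h2

/-- reflection as a continuous linear map -/
noncomputable def sigmaCLM (n : ℕ) :
    (EuclideanSpace ℝ (Fin n) × EuclideanSpace ℝ (Fin n)) →L[ℝ]
      (EuclideanSpace ℝ (Fin n) × EuclideanSpace ℝ (Fin n)) :=
  (ContinuousLinearMap.fst ℝ _ _).prod (-(ContinuousLinearMap.snd ℝ _ _))

lemma sigmaCLM_apply {n : ℕ} (z : EuclideanSpace ℝ (Fin n) × EuclideanSpace ℝ (Fin n)) :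
    sigmaCLM n z = (z.1, -z.2) := rfl

lemma fderiv_sigma {n : ℕ} (f : EuclideanSpace ℝ (Fin n) × EuclideanSpace ℝ (Fin n) → ℝ)
    (hf : Differentiable ℝ f)
    (hfsym : ∀ z : EuclideanSpace ℝ (Fin n) × EuclideanSpace ℝ (Fin n), f (z.1, -z.2) = f z)
    (z u : EuclideanSpace ℝ (Fin n) × EuclideanSpace ℝ (Fin n)) :
    fderiv ℝ f (z.1, -z.2) u = fderiv ℝ f z (u.1, -u.2) := by
  have hcomp : (fun w => f (sigmaCLM n w)) = f := funext fun w => hfsym w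
  have hA : ∀ w, fderiv ℝ f w = (fderiv ℝ f (sigmaCLM n w)).comp (sigmaCLM n) := by
    intro w
    conv_lhs => rw [← hcomp]
    rw [show (fun w => f ((sigmaCLM n) w)) = f ∘ (sigmaCLM n) from rfl,
      fderiv_comp w (hf _) (sigmaCLM n).differentiableAt, (sigmaCLM n).fderiv]
  have hLL : sigmaCLM n (sigmaCLM n z) = z := by
    rw [sigmaCLM_apply, sigmaCLM_apply]
    exact Prod.ext rfl (neg_neg _)
  have := congrArg (fun (T : _ →L[ℝ] ℝ) => T u) (hA (sigmaCLM n z))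
  simp only [ContinuousLinearMap.comp_apply, hLL] at this
  rw [← sigmaCLM_apply z, this, sigmaCLM_apply]

lemma f_const_along {n : ℕ} (f : EuclideanSpace ℝ (Fin n) × EuclideanSpace ℝ (Fin n) → ℝ)
    (hf : Differentiable ℝ f)
    (vf : EuclideanSpace ℝ (Fin n) × EuclideanSpace ℝ (Fin n) →
      EuclideanSpace ℝ (Fin n) × EuclideanSpace ℝ (Fin n))
    (hvf : ∀ z u, omega0 (vf z) u = fderiv ℝ f z u)
    (γ : ℝ → EuclideanSpace ℝ (Fin n) × EuclideanSpace ℝ (Fin n))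
    (hγ : ∀ t : ℝ, HasDerivAt γ (vf (γ t)) t)
    (hγ0 : f (γ 0) = 1) : ∀ t, f (γ t) = 1 := by
  have hd : ∀ t : ℝ, HasDerivAt (fun t => f (γ t)) 0 t := by
    intro t
    have h0 : fderiv ℝ f (γ t) (vf (γ t)) = 0 := by rw [← hvf, omega0_self]
    have := (hf (γ t)).hasFDerivAt.comp_hasDerivAt t (hγ t)
    rwa [h0] at this
  intro t
  have := is_const_of_deriv_eq_zero (fun x => (hd x).differentiableAt)
    (fun x => (hd x).deriv) t 0
  exact this.trans hγ0

lemma fderiv_h {n : ℕ} (f : EuclideanSpace ℝ (Fin n) × EuclideanSpace ℝ (Fin n) → ℝ)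
    (hf : Differentiable ℝ f)
    (z : (EuclideanSpace ℝ (Fin n) × EuclideanSpace ℝ (Fin n)) ×
      (EuclideanSpace ℝ (Fin n) × EuclideanSpace ℝ (Fin n)))
    (h1 : f z.1 = 1) (h2 : f z.2 = 1)
    (u : (EuclideanSpace ℝ (Fin n) × EuclideanSpace ℝ (Fin n)) ×
      (EuclideanSpace ℝ (Fin n) × EuclideanSpace ℝ (Fin n))) :
    fderiv ℝ (fun w : (EuclideanSpace ℝ (Fin n) × EuclideanSpace ℝ (Fin n)) ×
        (EuclideanSpace ℝ (Fin n) × EuclideanSpace ℝ (Fin n)) =>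
          Real.sqrt (f w.1 ^ 2 + f w.2 ^ 2)) z u =
      (Real.sqrt 2)⁻¹ * (fderiv ℝ f z.1 u.1 + fderiv ℝ f z.2 u.2) := by
  have hf1 : HasFDerivAt (fun w : (EuclideanSpace ℝ (Fin n) × EuclideanSpace ℝ (Fin n)) ×
      (EuclideanSpace ℝ (Fin n) × EuclideanSpace ℝ (Fin n)) => f w.1)
      ((fderiv ℝ f z.1).comp (ContinuousLinearMap.fst ℝ _ _)) z :=
    (hf z.1).hasFDerivAt.comp z hasFDerivAt_fst
  have hf2 : HasFDerivAt (fun w : (EuclideanSpace ℝ (Fin n) × EuclideanSpace ℝ (Fin n)) ×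
      (EuclideanSpace ℝ (Fin n) × EuclideanSpace ℝ (Fin n)) => f w.2)
      ((fderiv ℝ f z.2).comp (ContinuousLinearMap.snd ℝ _ _)) z :=
    (hf z.2).hasFDerivAt.comp z hasFDerivAt_snd
  have hg := (hf1.mul hf1).add (hf2.mul hf2)
  have hne : f z.1 * f z.1 + f z.2 * f z.2 ≠ 0 := by rw [h1, h2]; norm_num
  have hs := (Real.hasDerivAt_sqrt hne).comp_hasFDerivAt z hg
  have hs' : HasFDerivAt (fun w : (EuclideanSpace ℝ (Fin n) × EuclideanSpace ℝ (Fin n)) ×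
      (EuclideanSpace ℝ (Fin n) × EuclideanSpace ℝ (Fin n)) =>
        Real.sqrt (f w.1 ^ 2 + f w.2 ^ 2))
      ((1 / (2 * Real.sqrt (f z.1 * f z.1 + f z.2 * f z.2))) •
        (f z.1 • (fderiv ℝ f z.1).comp (ContinuousLinearMap.fst ℝ _ _) +
          f z.1 • (fderiv ℝ f z.1).comp (ContinuousLinearMap.fst ℝ _ _) +
          (f z.2 • (fderiv ℝ f z.2).comp (ContinuousLinearMap.snd ℝ _ _) +
            f z.2 • (fderiv ℝ f z.2).comp (ContinuousLinearMap.snd ℝ _ _)))) z := by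
    simp only [pow_two]
    exact hs
  rw [hs'.fderiv]
  have hsq2 : Real.sqrt 2 ≠ 0 := by positivity
  simp only [ContinuousLinearMap.coe_smul', Pi.smul_apply, ContinuousLinearMap.add_apply,
    ContinuousLinearMap.smul_apply, ContinuousLinearMap.comp_apply,
    ContinuousLinearMap.coe_fst', ContinuousLinearMap.coe_snd', smul_eq_mul, h1, h2]
  rw [show (1 : ℝ) * 1 + 1 * 1 = 2 by norm_num]
  field_simp
  ring
/-- Forward direction of the paper's Lemma "three ways of looking at a Reeb
chord": a chord of length `ℓ` for the flow of `f` from `(x₁,ξ₁)` to `(x₂,ξ₂)`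
yields a chord of length `ℓ/√2` for the flow of `f # f` from the conormal of
the diagonal to the point `(x₁,−ξ₁,x₂,ξ₂)`. -/
theorem chord_to_diagonal_chord (n : ℕ) (hn : 1 ≤ n)
    (f : EuclideanSpace ℝ (Fin n) × EuclideanSpace ℝ (Fin n) → ℝ)
    (hf : Differentiable ℝ f)
    (hfpos : ∀ z, 0 < f z)
    (hfsym : ∀ z : EuclideanSpace ℝ (Fin n) × EuclideanSpace ℝ (Fin n), f (z.1, -z.2) = f z)
    (vf : EuclideanSpace ℝ (Fin n) × EuclideanSpace ℝ (Fin n) →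
      EuclideanSpace ℝ (Fin n) × EuclideanSpace ℝ (Fin n))
    (hvf : ∀ z u, omega0 (vf z) u = fderiv ℝ f z u)
    (γ : ℝ → EuclideanSpace ℝ (Fin n) × EuclideanSpace ℝ (Fin n))
    (hγ : ∀ t : ℝ, HasDerivAt γ (vf (γ t)) t)
    (hγ0 : f (γ 0) = 1)
    (ℓ : ℝ) (hℓ : 0 < ℓ)
    (vh : (EuclideanSpace ℝ (Fin n) × EuclideanSpace ℝ (Fin n)) ×
        (EuclideanSpace ℝ (Fin n) × EuclideanSpace ℝ (Fin n)) →
      (EuclideanSpace ℝ (Fin n) × EuclideanSpace ℝ (Fin n)) ×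
        (EuclideanSpace ℝ (Fin n) × EuclideanSpace ℝ (Fin n)))
    (hvh : ∀ z u, omega0 (vh z).1 u.1 + omega0 (vh z).2 u.2 =
      fderiv ℝ (fun w : (EuclideanSpace ℝ (Fin n) × EuclideanSpace ℝ (Fin n)) ×
        (EuclideanSpace ℝ (Fin n) × EuclideanSpace ℝ (Fin n)) =>
          Real.sqrt (f w.1 ^ 2 + f w.2 ^ 2)) z u) :
    (∀ t : ℝ, HasDerivAt
      (fun t => ((((γ (ℓ / 2 - t / Real.sqrt 2)).1, -(γ (ℓ / 2 - t / Real.sqrt 2)).2),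
        γ (ℓ / 2 + t / Real.sqrt 2))))
      (vh (((γ (ℓ / 2 - t / Real.sqrt 2)).1, -(γ (ℓ / 2 - t / Real.sqrt 2)).2),
        γ (ℓ / 2 + t / Real.sqrt 2))) t) ∧
    ((((γ (ℓ / 2 - 0 / Real.sqrt 2)).1, -(γ (ℓ / 2 - 0 / Real.sqrt 2)).2),
        γ (ℓ / 2 + 0 / Real.sqrt 2)) =
      (((γ (ℓ / 2)).1, -(γ (ℓ / 2)).2), γ (ℓ / 2))) ∧
    ((((γ (ℓ / 2)).1, -(γ (ℓ / 2)).2), γ (ℓ / 2)) ∈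
      {w : (EuclideanSpace ℝ (Fin n) × EuclideanSpace ℝ (Fin n)) ×
          (EuclideanSpace ℝ (Fin n) × EuclideanSpace ℝ (Fin n)) |
        ∃ x ξ : EuclideanSpace ℝ (Fin n), w = ((x, -ξ), (x, ξ))}) ∧
    ((((γ (ℓ / 2 - (ℓ / Real.sqrt 2) / Real.sqrt 2)).1,
        -(γ (ℓ / 2 - (ℓ / Real.sqrt 2) / Real.sqrt 2)).2),
        γ (ℓ / 2 + (ℓ / Real.sqrt 2) / Real.sqrt 2)) =
      (((γ 0).1, -(γ 0).2), γ ℓ)) := by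
  have fconst := f_const_along f hf vf hvf γ hγ hγ0
  have hsq2 : Real.sqrt 2 ≠ 0 := by positivity
  refine ⟨?_, ?_, ?_, ?_⟩
  · intro t
    set c : ℝ := 1 / Real.sqrt 2 with hc
    set s1 : ℝ := ℓ / 2 - t / Real.sqrt 2 with hs1
    set s2 : ℝ := ℓ / 2 + t / Real.sqrt 2 with hs2
    -- derivative of the curve
    have hg1 : HasDerivAt (fun t : ℝ => ℓ / 2 - t / Real.sqrt 2) (-c) t :=
      ((hasDerivAt_id t).div_const (Real.sqrt 2)).const_sub (ℓ / 2)
    have hg2 : HasDerivAt (fun t : ℝ => ℓ / 2 + t / Real.sqrt 2) c t :=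
      ((hasDerivAt_id t).div_const (Real.sqrt 2)).const_add (ℓ / 2)
    have hc1 : HasDerivAt (fun t : ℝ => γ (ℓ / 2 - t / Real.sqrt 2))
        ((-c) • vf (γ s1)) t := (hγ s1).scomp t hg1
    have hc2 : HasDerivAt (fun t : ℝ => γ (ℓ / 2 + t / Real.sqrt 2))
        (c • vf (γ s2)) t := (hγ s2).scomp t hg2
    have hc1' : HasDerivAt
        (fun t : ℝ => ((γ (ℓ / 2 - t / Real.sqrt 2)).1, -(γ (ℓ / 2 - t / Real.sqrt 2)).2))
        ((-c) • (vf (γ s1)).1, c • (vf (γ s1)).2) t := by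
      have := (sigmaCLM n).hasFDerivAt.comp_hasDerivAt t hc1
      have heq : sigmaCLM n ((-c) • vf (γ s1)) = ((-c) • (vf (γ s1)).1, c • (vf (γ s1)).2) := by
        rw [sigmaCLM_apply]
        refine Prod.ext rfl ?_
        show -((-c) • vf (γ s1)).2 = c • (vf (γ s1)).2
        rw [Prod.smul_snd, neg_smul, neg_neg]
      rwa [heq] at this
    have hδ := hc1'.prodMk hc2
    -- identify the velocity with the Hamiltonian vector field of h
    set z : (EuclideanSpace ℝ (Fin n) × EuclideanSpace ℝ (Fin n)) ×
        (EuclideanSpace ℝ (Fin n) × EuclideanSpace ℝ (Fin n)) :=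
      (((γ s1).1, -(γ s1).2), γ s2) with hz
    set W : (EuclideanSpace ℝ (Fin n) × EuclideanSpace ℝ (Fin n)) ×
        (EuclideanSpace ℝ (Fin n) × EuclideanSpace ℝ (Fin n)) :=
      (((-c) • (vf (γ s1)).1, c • (vf (γ s1)).2), c • vf (γ s2)) with hW
    have hfz1 : f z.1 = 1 := by
      rw [hz]
      exact (hfsym (γ s1)).trans (fconst s1)
    have hfz2 : f z.2 = 1 := fconst s2
    have key : ∀ u : (EuclideanSpace ℝ (Fin n) × EuclideanSpace ℝ (Fin n)) ×
        (EuclideanSpace ℝ (Fin n) × EuclideanSpace ℝ (Fin n)),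
        omega0 (vh z).1 u.1 + omega0 (vh z).2 u.2 =
        omega0 W.1 u.1 + omega0 W.2 u.2 := by
      intro u
      rw [hvh z u, fderiv_h f hf z hfz1 hfz2 u]
      have hzz : z.1 = ((γ s1).1, -(γ s1).2) := rfl
      rw [show fderiv ℝ f z.1 u.1 = fderiv ℝ f (γ s1) (u.1.1, -u.1.2) from by
        rw [hzz]; exact fderiv_sigma f hf hfsym (γ s1) u.1]
      rw [show (z.2 : EuclideanSpace ℝ (Fin n) × EuclideanSpace ℝ (Fin n)) = γ s2 from rfl]
      rw [← hvf, ← hvf, hW]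
      simp only [omega0, Prod.smul_fst, Prod.smul_snd, real_inner_smul_left,
        real_inner_smul_right, inner_neg_left, inner_neg_right, neg_smul]
      ring
    have hcomp1 : (vh z).1 = W.1 := by
      apply omega0_nondeg
      intro u1
      have := key (u1, 0)
      simpa only [omega0_zero_right, add_zero] using this
    have hcomp2 : (vh z).2 = W.2 := by
      apply omega0_nondeg
      intro u2
      have := key (0, u2)
      simpa only [omega0_zero_right, zero_add] using this
    have hvhz : vh z = W := Prod.ext hcomp1 hcomp2
    rw [show vh (((γ (ℓ / 2 - t / Real.sqrt 2)).1, -(γ (ℓ / 2 - t / Real.sqrt 2)).2),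
        γ (ℓ / 2 + t / Real.sqrt 2)) = W from hvhz]
    exact hδ
  · norm_num
  · exact ⟨(γ (ℓ / 2)).1, (γ (ℓ / 2)).2, rfl⟩
  · have h2 : Real.sqrt 2 * Real.sqrt 2 = 2 := Real.mul_self_sqrt (by norm_num)
    have e1 : ℓ / Real.sqrt 2 / Real.sqrt 2 = ℓ / 2 := by rw [div_div, h2]
    rw [e1, sub_self, add_halves]
end

section
/- Let V be a real vector space, let ω₁, ω₂ : V × V → ℝ be alternating bilinear forms, and let A, K ⊆ V be subspaces with A + K = V. Assume: ω₁(a, v) = 0 for all a ∈ A and v ∈ V; ω₂(k, v) = 0 for all k ∈ K and v ∈ V; the restriction of ω₁ to K is nondegenerate (if k ∈ K and ω₁(k, k') = 0 for all k' ∈ K then k = 0); and the restriction of ω₂ to A is nondegenerate. Then ω₁ + ω₂ is nondegenerate on V: if x ∈ V satisfies (ω₁ + ω₂)(x, v) = 0 for all v ∈ V, then x = 0. -/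
/-- Linear-algebra heart of the paper's Lemma `lem:symprelcot`: if `V = A + K`,
`ω₁` vanishes on `A`, `ω₂` vanishes on `K`, `ω₁` is nondegenerate on `K` and
`ω₂` is nondegenerate on `A`, then `ω₁ + ω₂` is nondegenerate on `V`. -/
theorem sum_of_forms_nondegenerate
    (V : Type*) [AddCommGroup V] [Module ℝ V]
    (ω₁ ω₂ : V →ₗ[ℝ] V →ₗ[ℝ] ℝ)
    (h1alt : ∀ v : V, ω₁ v v = 0) (h2alt : ∀ v : V, ω₂ v v = 0)
    (A K : Submodule ℝ V) (hsum : A ⊔ K = ⊤)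
    (h1A : ∀ a ∈ A, ∀ v : V, ω₁ a v = 0)
    (h2K : ∀ k ∈ K, ∀ v : V, ω₂ k v = 0)
    (h1K : ∀ k ∈ K, (∀ k' ∈ K, ω₁ k k' = 0) → k = 0)
    (h2A : ∀ a ∈ A, (∀ a' ∈ A, ω₂ a a' = 0) → a = 0) :
    ∀ x : V, (∀ v : V, ω₁ x v + ω₂ x v = 0) → x = 0 := by
  -- skew-symmetry from alternating
  have skew1 : ∀ u v : V, ω₁ u v = -ω₁ v u := by
    intro u v
    have h := h1alt (u + v)
    simp only [map_add, LinearMap.add_apply, h1alt] at h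
    linarith
  have skew2 : ∀ u v : V, ω₂ u v = -ω₂ v u := by
    intro u v
    have h := h2alt (u + v)
    simp only [map_add, LinearMap.add_apply, h2alt] at h
    linarith
  intro x hx
  have hxmem : x ∈ A ⊔ K := hsum ▸ Submodule.mem_top
  rw [Submodule.mem_sup] at hxmem
  obtain ⟨a, ha, k, hk, rfl⟩ := hxmem
  have hk0 : k = 0 := by
    apply h1K k hk
    intro k' hk'
    have h := hx k'
    have e1 : ω₁ (a + k) k' = ω₁ k k' := by
      simp [map_add, h1A a ha]
    have e2 : ω₂ (a + k) k' = 0 := by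
      have : ω₂ a k' = 0 := by rw [skew2]; simp [h2K k' hk']
      simp [map_add, this, h2K k hk]
    rw [e1, e2] at h
    linarith
  subst hk0
  have ha0 : a = 0 := by
    apply h2A a ha
    intro a' ha'
    have h := hx a'
    have e1 : ω₁ (a + 0) a' = 0 := by simp [h1A a ha]
    have e2 : ω₂ (a + 0) a' = ω₂ a a' := by simp
    rw [e1, e2] at h
    linarith
  simp [ha0]
end

section
/- Let V be a real vector space with an internal direct sum decomposition V = A ⊕ K, and let ω₁, ω₂ : V × V → ℝ be alternating bilinear forms with ω₁(a, v) = 0 for all a ∈ A, v ∈ V and ω₂(k, v) = 0 for all k ∈ K, v ∈ V. Let P ⊆ A be a maximal isotropic subspace for the restriction of ω₂ to A, and let Q ⊆ K be a maximal isotropic subspace for the restriction of ω₁ to K (a subspace is isotropic for a form if the form vanishes identically on it; maximal isotropic if it is not properly contained in any larger isotropic subspace of A, respectively K). Then P ⊕ Q is a maximal isotropic subspace of V for the form ω₁ + ω₂. -/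
/-- Fiberwise linear-algebra content of the paper's Lemma `lem:symprelcot` and
Proposition `prop:liouvrelcot` (4): if `V = A ⊕ K`, `ω₁` vanishes on `A`, `ω₂`
vanishes on `K`, `P ⊆ A` is maximal isotropic for `ω₂|_A` and `Q ⊆ K` is
maximal isotropic for `ω₁|_K`, then `P ⊕ Q` is maximal isotropic in `V` for
`ω₁ + ω₂`. -/
theorem direct_sum_of_maximal_isotropics
    (V : Type*) [AddCommGroup V] [Module ℝ V]
    (A K : Submodule ℝ V) (hcompl : IsCompl A K)
    (ω₁ ω₂ : V →ₗ[ℝ] V →ₗ[ℝ] ℝ)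
    (h1alt : ∀ v : V, ω₁ v v = 0) (h2alt : ∀ v : V, ω₂ v v = 0)
    (h1A : ∀ a ∈ A, ∀ v : V, ω₁ a v = 0)
    (h2K : ∀ k ∈ K, ∀ v : V, ω₂ k v = 0)
    (P : Submodule ℝ V) (hPA : P ≤ A)
    (hPiso : ∀ p ∈ P, ∀ p' ∈ P, ω₂ p p' = 0)
    (hPmax : ∀ P' : Submodule ℝ V, P' ≤ A →
      (∀ x ∈ P', ∀ y ∈ P', ω₂ x y = 0) → P ≤ P' → P' = P)
    (Q : Submodule ℝ V) (hQK : Q ≤ K)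
    (hQiso : ∀ q ∈ Q, ∀ q' ∈ Q, ω₁ q q' = 0)
    (hQmax : ∀ Q' : Submodule ℝ V, Q' ≤ K →
      (∀ x ∈ Q', ∀ y ∈ Q', ω₁ x y = 0) → Q ≤ Q' → Q' = Q) :
    (∀ x ∈ P ⊔ Q, ∀ y ∈ P ⊔ Q, ω₁ x y + ω₂ x y = 0) ∧
    (∀ R : Submodule ℝ V, (∀ x ∈ R, ∀ y ∈ R, ω₁ x y + ω₂ x y = 0) →
      P ⊔ Q ≤ R → R = P ⊔ Q) := by
  have skew : ∀ (ω : V →ₗ[ℝ] V →ₗ[ℝ] ℝ), (∀ v, ω v v = 0) →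
      ∀ u v : V, ω u v = - ω v u := by
    intro ω h u v
    have h' := h (u + v)
    simp only [map_add, LinearMap.add_apply, h u, h v] at h'
    linarith
  have h1A' : ∀ (v : V), ∀ a ∈ A, ω₁ v a = 0 := by
    intro v a ha
    rw [skew ω₁ h1alt, h1A a ha v, neg_zero]
  have h2K' : ∀ (v : V), ∀ k ∈ K, ω₂ v k = 0 := by
    intro v k hk
    rw [skew ω₂ h2alt, h2K k hk v, neg_zero]
  constructor
  · intro x hx y hy
    obtain ⟨p, hp, q, hq, rfl⟩ := Submodule.mem_sup.mp hx
    obtain ⟨p', hp', q', hq', rfl⟩ := Submodule.mem_sup.mp hy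
    simp only [map_add, LinearMap.add_apply,
      h1A p (hPA hp), h1A' q p' (hPA hp'), hQiso q hq q' hq',
      h2K q (hQK hq), h2K' p q' (hQK hq'), hPiso p hp p' hp']
    ring
  · intro R hRiso hle
    refine le_antisymm ?_ hle
    intro r hr
    have hrtop : r ∈ A ⊔ K := by
      rw [codisjoint_iff.mp hcompl.codisjoint]; trivial
    obtain ⟨a, ha, k, hk, hak⟩ := Submodule.mem_sup.mp hrtop
    -- ω₂ r p' = 0 for p' ∈ P
    have key2 : ∀ p' ∈ P, ω₂ r p' = 0 := by
      intro p' hp'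
      have h0 := hRiso r hr p' (hle (Submodule.mem_sup_left hp'))
      have h1 := h1A' r p' (hPA hp')
      linarith
    have key1 : ∀ q' ∈ Q, ω₁ r q' = 0 := by
      intro q' hq'
      have h0 := hRiso r hr q' (hle (Submodule.mem_sup_right hq'))
      have h2 := h2K' r q' (hQK hq')
      linarith
    have ha2 : ∀ p' ∈ P, ω₂ a p' = 0 := by
      intro p' hp'
      have : a = r - k := by rw [← hak]; abel
      rw [this, map_sub, LinearMap.sub_apply, key2 p' hp', h2K k hk p', sub_zero]
    have hk1 : ∀ q' ∈ Q, ω₁ k q' = 0 := by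
      intro q' hq'
      have : k = r - a := by rw [← hak]; abel
      rw [this, map_sub, LinearMap.sub_apply, key1 q' hq', h1A a ha q', sub_zero]
    have haP : a ∈ P := by
      have hPa : P ⊔ Submodule.span ℝ {a} = P := by
        apply hPmax
        · exact sup_le hPA ((Submodule.span_singleton_le_iff_mem a A).mpr ha)
        · intro x hx y hy
          obtain ⟨p, hp, z, hz, rfl⟩ := Submodule.mem_sup.mp hx
          obtain ⟨p', hp', z', hz', rfl⟩ := Submodule.mem_sup.mp hy
          obtain ⟨c, rfl⟩ := Submodule.mem_span_singleton.mp hz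
          obtain ⟨c', rfl⟩ := Submodule.mem_span_singleton.mp hz'
          have e1 : ω₂ a p' = 0 := ha2 p' hp'
          have e2 : ω₂ p a = 0 := by rw [skew ω₂ h2alt, ha2 p hp, neg_zero]
          simp only [map_add, map_smul, LinearMap.add_apply, LinearMap.smul_apply,
            smul_eq_mul, hPiso p hp p' hp', e1, e2, h2alt a]
          ring
        · exact le_sup_left
      rw [← hPa]
      exact Submodule.mem_sup_right (Submodule.mem_span_singleton_self a)
    have hkQ : k ∈ Q := by
      have hQk : Q ⊔ Submodule.span ℝ {k} = Q := by
        apply hQmax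
        · exact sup_le hQK ((Submodule.span_singleton_le_iff_mem k K).mpr hk)
        · intro x hx y hy
          obtain ⟨q, hq, z, hz, rfl⟩ := Submodule.mem_sup.mp hx
          obtain ⟨q', hq', z', hz', rfl⟩ := Submodule.mem_sup.mp hy
          obtain ⟨c, rfl⟩ := Submodule.mem_span_singleton.mp hz
          obtain ⟨c', rfl⟩ := Submodule.mem_span_singleton.mp hz'
          have e1 : ω₁ k q' = 0 := hk1 q' hq'
          have e2 : ω₁ q k = 0 := by rw [skew ω₁ h1alt, hk1 q hq, neg_zero]
          simp only [map_add, map_smul, LinearMap.add_apply, LinearMap.smul_apply,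
            smul_eq_mul, hQiso q hq q' hq', e1, e2, h1alt k]
          ring
        · exact le_sup_left
      rw [← hQk]
      exact Submodule.mem_sup_right (Submodule.mem_span_singleton_self k)
    rw [← hak]
    exact Submodule.add_mem _ (Submodule.mem_sup_left haP) (Submodule.mem_sup_right hkQ)
end
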